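/- Let d ≥ 1, α > 2, and F_d(θ) = ∑_{z ∈ ℤ^d \ {0}} ‖z‖^{−(d+α)}(1 − cos⟨z,θ⟩). Then as θ → 0, F_d(θ) ≃ (1/6) C_d |θ|², where C_d = ∑_{n=1}^∞ n^{−(d+α−1)} [ (2n+1)^d (n+1) − (2n−1)^d (n−1) ] and |θ| is the Euclidean norm, i.e. F_d(θ)/((1/6)C_d|θ|²) → 1 as θ → 0. -/

import Mathlib

open Real Filter

/-- The summand of the series `F_d`. -/
noncomputable def FdTerm (d : ℕ) (α : ℝ) (z : Fin d → ℤ) (θ : Fin d → ℝ) : ℝ :=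
  if z = 0 then 0
  else ‖z‖ ^ (-((d : ℝ) + α)) * (1 - Real.cos (∑ i, (z i : ℝ) * θ i))

namespace FdAux

open Finset Topology

/-- sup of |z i| as a natural number -/
def M {d : ℕ} (z : Fin d → ℤ) : ℕ := Finset.univ.sup fun i => (z i).natAbs

lemma le_M {d : ℕ} (z : Fin d → ℤ) (i : Fin d) : (z i).natAbs ≤ M z :=
  Finset.le_sup (f := fun i => (z i).natAbs) (Finset.mem_univ i)

lemma norm_eq_M {d : ℕ} (z : Fin d → ℤ) (hd : 1 ≤ d) : ‖z‖ = (M z : ℝ) := by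
  have : Nonempty (Fin d) := ⟨⟨0, hd⟩⟩
  apply le_antisymm
  · rw [pi_norm_le_iff_of_nonneg (by positivity)]
    intro i
    rw [Int.norm_eq_abs, ← Int.cast_abs, Int.abs_eq_natAbs]
    exact_mod_cast Nat.cast_le.mpr (le_M z i)
  · obtain ⟨i, -, hi⟩ := Finset.exists_mem_eq_sup Finset.univ Finset.univ_nonempty
      (fun i => (z i).natAbs)
    rw [M, hi]
    calc ((z i).natAbs : ℝ) = ‖z i‖ := by
          rw [Int.norm_eq_abs, ← Int.cast_abs, Int.abs_eq_natAbs, Int.cast_natCast]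
      _ ≤ ‖z‖ := norm_le_pi_norm z i

lemma M_eq_zero {d : ℕ} (z : Fin d → ℤ) : M z = 0 ↔ z = 0 := by
  constructor
  · intro h
    funext i
    have := le_M z i
    have : z i = 0 := by omega
    simpa using this
  · intro h; subst h; simp [M]

lemma M_le_iff {d : ℕ} (z : Fin d → ℤ) (N : ℕ) : M z ≤ N ↔ ∀ i, (z i).natAbs ≤ N :=
  Finset.sup_le_iff.trans (by simp)

/-- box of radius N -/
noncomputable def box (d N : ℕ) : Finset (Fin d → ℤ) :=
  Fintype.piFinset fun _ => Finset.Icc (-(N : ℤ)) N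

lemma mem_box {d N : ℕ} {z : Fin d → ℤ} : z ∈ box d N ↔ M z ≤ N := by
  simp only [box, Fintype.mem_piFinset, Finset.mem_Icc, M_le_iff]
  constructor
  · intro h i; have := h i; omega
  · intro h i; have := h i; omega

lemma box_mono {d : ℕ} : Monotone (box d) := by
  intro a b hab z hz
  rw [mem_box] at *
  omega

lemma card_box (d N : ℕ) : (box d N).card = (2 * N + 1) ^ d := by
  simp only [box, Fintype.card_piFinset, Int.card_Icc, Finset.prod_const, Finset.card_univ,
    Fintype.card_fin]
  congr 1
  omega


lemma Icc_succ (N : ℕ) : Finset.Icc (-(N+1) : ℤ) (N+1) =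
    insert (-(N+1) : ℤ) (insert ((N+1) : ℤ) (Finset.Icc (-(N:ℤ)) N)) := by
  ext x; simp only [Finset.mem_Icc, Finset.mem_insert]; omega

lemma sum_Icc_sq (N : ℕ) :
    ∑ x ∈ Finset.Icc (-(N:ℤ)) N, (x:ℝ)^2 = (N*(N+1)*(2*N+1):ℝ)/3 := by
  induction N with
  | zero => simp
  | succ n ih =>
    push_cast
    rw [Icc_succ, Finset.sum_insert (by simp only [Finset.mem_insert, Finset.mem_Icc]; omega),
      Finset.sum_insert (by simp only [Finset.mem_Icc]; omega), ih]
    push_cast; ring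

lemma sum_piFinset_proj (d : ℕ) (t : Finset ℤ) (g : ℤ → ℝ) (i₀ : Fin d) :
    ∑ z ∈ Fintype.piFinset (fun _ : Fin d => t), g (z i₀)
      = (t.card : ℝ)^(d-1) * ∑ x ∈ t, g x := by
  have key := Finset.prod_univ_sum (fun _ : Fin d => t)
    (fun i (x : ℤ) => if i = i₀ then g x else 1)
  have h1 : ∀ z : Fin d → ℤ, (∏ i, if i = i₀ then g (z i) else 1) = g (z i₀) := by
    intro z
    rw [Finset.prod_ite_eq' Finset.univ i₀ (fun i => g (z i))]
    simp
  have h2 : (∏ i : Fin d, ∑ x ∈ t, if i = i₀ then g x else 1)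
      = (∑ x ∈ t, g x) * (t.card : ℝ)^(d-1) := by
    rw [← Finset.mul_prod_erase Finset.univ _ (Finset.mem_univ i₀)]
    simp only [if_pos rfl]
    congr 1
    rw [Finset.prod_congr rfl (fun i hi => ?_), Finset.prod_const,
      Finset.card_erase_of_mem (Finset.mem_univ i₀), Finset.card_univ, Fintype.card_fin]
    rw [Finset.sum_congr rfl (fun x _ => if_neg (Finset.mem_erase.mp hi).1), Finset.sum_const,
      nsmul_eq_mul, mul_one]
  rw [Finset.sum_congr rfl (fun z _ => (h1 z).symm), ← key, h2, mul_comm]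

lemma sum_box_proj_sq (d N : ℕ) (i₀ : Fin d) :
    ∑ z ∈ box d N, ((z i₀ : ℝ))^2
      = ((2*N+1 : ℝ))^(d-1) * (N*(N+1)*(2*N+1)/3 : ℝ) := by
  rw [box, sum_piFinset_proj d _ (fun x : ℤ => (x:ℝ)^2) i₀, sum_Icc_sq]
  rw [Int.card_Icc]
  have : ((N:ℤ) + 1 - -(N:ℤ)).toNat = 2*N+1 := by omega
  rw [this]
  push_cast
  ring

lemma box_zero (d : ℕ) : box d 0 = {0} := by
  ext z
  simp only [mem_box, Finset.mem_singleton, Nat.le_zero, M_eq_zero]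

lemma sum_box_telescope {d : ℕ} (f : (Fin d → ℤ) → ℝ) (N : ℕ) :
    ∑ z ∈ box d N, f z
      = f 0 + ∑ n ∈ Finset.range N, ∑ z ∈ box d (n+1) \ box d n, f z := by
  induction N with
  | zero => simp [box_zero]
  | succ n ih =>
    rw [Finset.sum_range_succ, ← add_assoc, ← ih, add_comm (∑ z ∈ box d n, f z),
      Finset.sum_sdiff (box_mono (Nat.le_succ n))]

lemma mem_shell {d N : ℕ} {z : Fin d → ℤ} :
    z ∈ box d (N+1) \ box d N ↔ M z = N + 1 := by
  simp only [Finset.mem_sdiff, mem_box]; omega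


lemma pow_sub_pow_le {a b : ℝ} (d : ℕ) (hb : 0 ≤ b) (hba : b ≤ a) :
    a ^ d - b ^ d ≤ d * a ^ (d-1) * (a - b) := by
  rw [← geom_sum₂_mul]
  have : (∑ i ∈ Finset.range d, a ^ i * b ^ (d - 1 - i)) ≤ d * a ^ (d-1) := by
    calc (∑ i ∈ Finset.range d, a ^ i * b ^ (d - 1 - i))
        ≤ ∑ i ∈ Finset.range d, a ^ (d-1) := by
          apply Finset.sum_le_sum
          intro i hi
          rw [Finset.mem_range] at hi
          calc a ^ i * b ^ (d-1-i) ≤ a ^ i * a ^ (d-1-i) := by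
                apply mul_le_mul_of_nonneg_left (pow_le_pow_left₀ hb hba _)
                  (pow_nonneg (hb.trans hba) _)
            _ = a ^ (i + (d-1-i)) := (pow_add a i (d-1-i)).symm
            _ = a ^ (d-1) := by congr 1; omega
      _ = d * a ^ (d-1) := by rw [Finset.sum_const, Finset.card_range, nsmul_eq_mul]
  exact mul_le_mul_of_nonneg_right this (by linarith)

lemma shell_card_le (d n : ℕ) (hd : 1 ≤ d) :
    ((box d (n+1) \ box d n).card : ℝ) ≤ 2*d*3^(d-1) * ((n+1:ℝ))^(d-1) := by
  rw [Finset.card_sdiff_of_subset (box_mono (Nat.le_succ n)), card_box, card_box]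
  have hle : (2*n+1)^d ≤ (2*(n+1)+1)^d :=
    Nat.pow_le_pow_left (by omega) d
  rw [Nat.cast_sub hle]
  push_cast
  have h1 : ((2*(n+1)+1 : ℝ))^d - ((2*n+1 : ℝ))^d
      ≤ d * ((2*(n+1)+1:ℝ))^(d-1) * 2 := by
    have := pow_sub_pow_le (a := (2*(n+1)+1 : ℝ)) (b := (2*n+1 : ℝ)) d (by positivity)
      (by push_cast; linarith)
    convert this using 2 <;> push_cast <;> ring
  calc ((2*(↑n+1)+1 : ℝ))^d - ((2*↑n+1 : ℝ))^d
      ≤ d * ((2*(n+1)+1:ℝ))^(d-1) * 2 := by convert h1 using 2 <;> push_cast <;> ring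
    _ ≤ d * ((3*(n+1):ℝ))^(d-1) * 2 := by
        have hpow : ((2*(n+1)+1:ℝ))^(d-1) ≤ ((3*(n+1):ℝ))^(d-1) :=
          pow_le_pow_left₀ (by positivity) (by push_cast; linarith) _
        have : (0:ℝ) ≤ d := Nat.cast_nonneg d
        nlinarith [pow_nonneg (by positivity : (0:ℝ) ≤ (2*(n+1)+1:ℝ)) (d-1)]
    _ = 2*d*3^(d-1) * ((n+1:ℝ))^(d-1) := by rw [mul_pow]; ring

lemma summable_aux_nat {p : ℝ} (hp : p < -1) :
    Summable (fun n : ℕ => ((n:ℝ)+1)^p) := by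
  have := (Real.summable_nat_rpow (p := p)).mpr hp
  have h2 := (summable_nat_add_iff 1).mpr this
  refine h2.congr fun n => ?_
  push_cast
  rfl

lemma summable_G (d : ℕ) (hd : 1 ≤ d) {β : ℝ} (hβ : (d:ℝ) + 2 < β) :
    Summable (fun z : Fin d → ℤ => if z = 0 then 0 else ((M z : ℝ))^(2-β)) := by
  set g := fun z : Fin d → ℤ => if z = 0 then (0:ℝ) else ((M z : ℝ))^(2-β) with hg
  have hnon : 0 ≤ g := by
    intro z
    simp only [hg]
    split
    · exact le_refl 0
    · positivity
  have hsum := summable_aux_nat (p := (d:ℝ)+1-β) (by linarith)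
  set T := ∑' n : ℕ, ((n:ℝ)+1)^((d:ℝ)+1-β) with hT
  apply summable_of_sum_le hnon (c := 2*d*3^(d-1) * T)
  intro u
  -- u is contained in a box
  obtain ⟨N, hN⟩ : ∃ N, u ⊆ box d N := by
    refine ⟨u.sup M, fun z hz => mem_box.mpr (Finset.le_sup hz)⟩
  calc ∑ z ∈ u, g z ≤ ∑ z ∈ box d N, g z :=
        Finset.sum_le_sum_of_subset_of_nonneg hN (fun z _ _ => hnon z)
    _ = g 0 + ∑ n ∈ Finset.range N, ∑ z ∈ box d (n+1) \ box d n, g z :=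
        sum_box_telescope g N
    _ ≤ 2*d*3^(d-1) * T := by
        have hg0 : g 0 = 0 := by simp [hg]
        rw [hg0, zero_add]
        have hshell : ∀ n ∈ Finset.range N, ∑ z ∈ box d (n+1) \ box d n, g z
            ≤ 2*d*3^(d-1) * ((n:ℝ)+1)^((d:ℝ)+1-β) := by
          intro n _
          have hzval : ∀ z ∈ box d (n+1) \ box d n, g z = ((n+1:ℝ))^(2-β) := by
            intro z hz
            have hM := mem_shell.mp hz
            have hz0 : z ≠ 0 := by
              intro h; rw [← M_eq_zero] at h; omega
            simp only [hg, if_neg hz0, hM]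
            push_cast
            rfl
          rw [Finset.sum_congr rfl hzval, Finset.sum_const, nsmul_eq_mul]
          calc ((box d (n+1) \ box d n).card : ℝ) * ((n+1:ℝ))^(2-β)
              ≤ (2*d*3^(d-1) * ((n+1:ℝ))^(d-1)) * ((n+1:ℝ))^(2-β) := by
                apply mul_le_mul_of_nonneg_right (shell_card_le d n hd) (by positivity)
            _ = 2*d*3^(d-1) * ((n:ℝ)+1)^((d:ℝ)+1-β) := by
                rw [mul_assoc]
                congr 1
                rw [← Real.rpow_natCast ((n+1:ℝ)) (d-1), ← Real.rpow_add (by positivity)]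
                congr 1
                have hc : ((d-1 : ℕ) : ℝ) = (d:ℝ) - 1 := by
                  rw [Nat.cast_sub hd, Nat.cast_one]
                rw [hc]; ring
        calc ∑ n ∈ Finset.range N, ∑ z ∈ box d (n+1) \ box d n, g z
            ≤ ∑ n ∈ Finset.range N, 2*d*3^(d-1) * ((n:ℝ)+1)^((d:ℝ)+1-β) :=
              Finset.sum_le_sum hshell
          _ = 2*d*3^(d-1) * ∑ n ∈ Finset.range N, ((n:ℝ)+1)^((d:ℝ)+1-β) := by
              rw [Finset.mul_sum]
          _ ≤ 2*d*3^(d-1) * T := by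
              apply mul_le_mul_of_nonneg_left _ (by positivity)
              exact Summable.sum_le_tsum _ (fun n _ => by positivity) hsum


section main
variable (d : ℕ) (α : ℝ)

/-- the weight -/
noncomputable def w (z : Fin d → ℤ) : ℝ :=
  if z = 0 then 0 else ((M z : ℝ))^(-((d:ℝ)+α))

/-- statement series summand -/
noncomputable def cseq (n : ℕ) : ℝ :=
  ((n : ℝ) + 1) ^ (-((d : ℝ) + α - 1)) *
    ((2 * ((n : ℝ) + 1) + 1) ^ d * (((n : ℝ) + 1) + 1) -
      (2 * ((n : ℝ) + 1) - 1) ^ d * (((n : ℝ) + 1) - 1))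

noncomputable def Bval (N : ℕ) : ℝ :=
  ((2*N+1 : ℝ))^(d-1) * ((N:ℝ)*((N:ℝ)+1)*(2*(N:ℝ)+1)/3)

variable {d α}

lemma one_le_M {z : Fin d → ℤ} (hz : z ≠ 0) : 1 ≤ M z := by
  rcases Nat.eq_zero_or_pos (M z) with h | h
  · exact absurd ((M_eq_zero z).mp h) hz
  · exact h

lemma w_nonneg (z : Fin d → ℤ) : 0 ≤ w d α z := by
  rw [w]; split
  · exact le_rfl
  · positivity

lemma w_mul_sq_le (hd : 1 ≤ d) (z : Fin d → ℤ) (i : Fin d) :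
    w d α z * ((z i : ℝ))^2 ≤ if z = 0 then 0 else ((M z : ℝ))^(2-((d:ℝ)+α)) := by
  by_cases hz : z = 0
  · simp [hz, w]
  · rw [w, if_neg hz, if_neg hz]
    have hM : (1:ℝ) ≤ (M z : ℝ) := by exact_mod_cast one_le_M hz
    have hMpos : (0:ℝ) < (M z : ℝ) := by linarith
    have hzi : ((z i : ℝ))^2 ≤ ((M z : ℝ))^2 := by
      have h1 : |(z i : ℝ)| ≤ (M z : ℝ) := by
        rw [← Int.cast_abs, Int.abs_eq_natAbs]
        exact_mod_cast Nat.cast_le.mpr (le_M z i)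
      calc ((z i : ℝ))^2 = |(z i : ℝ)|^2 := (sq_abs _).symm
        _ ≤ ((M z : ℝ))^2 := pow_le_pow_left₀ (abs_nonneg _) h1 2
    calc ((M z:ℝ))^(-((d:ℝ)+α)) * ((z i : ℝ))^2
        ≤ ((M z:ℝ))^(-((d:ℝ)+α)) * ((M z : ℝ))^2 := by
          apply mul_le_mul_of_nonneg_left hzi (by positivity)
      _ = ((M z : ℝ))^(2-((d:ℝ)+α)) := by
          rw [← Real.rpow_natCast ((M z : ℝ)) 2, ← Real.rpow_add hMpos]
          norm_num
          congr 1
          ring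

lemma summable_hfun (hd : 1 ≤ d) (hα : 2 < α) (i : Fin d) :
    Summable (fun z : Fin d → ℤ => w d α z * ((z i : ℝ))^2) := by
  apply Summable.of_nonneg_of_le
    (fun z => mul_nonneg (w_nonneg z) (sq_nonneg _))
    (fun z => w_mul_sq_le hd z i)
  exact summable_G d hd (by push_cast; linarith)

lemma shell_sum_hfun (hd : 1 ≤ d) (i : Fin d) (n : ℕ) :
    ∑ z ∈ box d (n+1) \ box d n, w d α z * ((z i : ℝ))^2
      = ((n+1:ℝ))^(-((d:ℝ)+α)) * (Bval d (n+1) - Bval d n) := by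
  have hcongr : ∀ z ∈ box d (n+1) \ box d n,
      w d α z * ((z i : ℝ))^2 = ((n+1:ℝ))^(-((d:ℝ)+α)) * ((z i : ℝ))^2 := by
    intro z hz
    have hM := mem_shell.mp hz
    have hz0 : z ≠ 0 := by
      intro h; rw [← M_eq_zero] at h; omega
    rw [w, if_neg hz0, hM]
    norm_num
  rw [Finset.sum_congr rfl hcongr, ← Finset.mul_sum]
  congr 1
  rw [Finset.sum_sdiff_eq_sub (box_mono (Nat.le_succ n)), sum_box_proj_sq, sum_box_proj_sq]
  rw [Bval, Bval]

lemma key_algebra (hd : 1 ≤ d) (n : ℕ) :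
    ((n+1:ℝ))^(-((d:ℝ)+α)) * (Bval d (n+1) - Bval d n) = (1/3) * cseq d α n := by
  obtain ⟨k, rfl⟩ : ∃ k, d = k + 1 := ⟨d - 1, by omega⟩
  have hrpow : ((n:ℝ)+1)^(-(((k+1:ℕ):ℝ)+α-1))
      = ((n+1:ℝ))^(-(((k+1:ℕ):ℝ)+α)) * ((n:ℝ)+1) := by
    rw [← Real.rpow_add_one (by positivity) (-(((k+1:ℕ):ℝ)+α))]
    congr 1
    push_cast
    ring
  rw [cseq, hrpow, Bval, Bval]
  have e1 : (k + 1) - 1 = k := rfl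
  rw [e1]
  push_cast
  rw [show (2*((n:ℝ)+1)-1) = 2*(n:ℝ)+1 from by ring]
  rw [pow_succ (2*((n:ℝ)+1)+1) k, pow_succ (2*(n:ℝ)+1) k]
  set W := ((n:ℝ)+1)^(-(((k:ℝ)+1)+α)) with hW
  set A := (2*((n:ℝ)+1)+1)^k with hA
  set B := (2*(n:ℝ)+1)^k with hB
  ring

lemma hasSum_cseq (hd : 1 ≤ d) (hα : 2 < α) (i : Fin d) :
    HasSum (cseq d α) (3 * ∑' z : Fin d → ℤ, w d α z * ((z i : ℝ))^2) := by
  set hfun := fun z : Fin d → ℤ => w d α z * ((z i : ℝ))^2 with hhfun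
  have hsummable := summable_hfun hd hα i
  set σ := ∑' z, hfun z with hσ
  have hbox : Tendsto (box d) atTop atTop :=
    tendsto_atTop_finset_of_monotone box_mono (fun z => ⟨M z, mem_box.mpr le_rfl⟩)
  have htendsto : Tendsto (fun N => ∑ z ∈ box d N, hfun z) atTop (𝓝 σ) := by
    have h := hsummable.hasSum
    unfold HasSum at h
    exact h.comp hbox
  have hpartial : ∀ N, ∑ z ∈ box d N, hfun z
      = ∑ n ∈ Finset.range N, (1/3) * cseq d α n := by
    intro N
    rw [sum_box_telescope hfun N]
    have h0 : hfun 0 = 0 := by simp [hhfun, w]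
    rw [h0, zero_add]
    apply Finset.sum_congr rfl
    intro n _
    rw [hhfun]
    rw [shell_sum_hfun hd i n, key_algebra hd n]
  have htendsto2 : Tendsto (fun N => ∑ n ∈ Finset.range N, (1/3) * cseq d α n)
      atTop (𝓝 σ) := by
    refine htendsto.congr fun N => hpartial N
  have hnonneg : ∀ n, 0 ≤ (1/3) * cseq d α n := by
    intro n
    rw [← key_algebra hd n, ← shell_sum_hfun (α := α) hd i n]
    apply Finset.sum_nonneg
    intro z _
    exact mul_nonneg (w_nonneg z) (sq_nonneg _)
  have hs : HasSum (fun n => (1/3) * cseq d α n) σ :=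
    (hasSum_iff_tendsto_nat_of_nonneg hnonneg σ).mpr htendsto2
  have := hs.mul_left 3
  simp only [← mul_assoc] at this
  norm_num at this
  exact this


lemma abs_le_M (z : Fin d → ℤ) (i : Fin d) : |(z i : ℝ)| ≤ (M z : ℝ) := by
  rw [← Int.cast_abs, Int.abs_eq_natAbs]
  exact_mod_cast Nat.cast_le.mpr (le_M z i)

lemma w_mul_le (hd : 1 ≤ d) (z : Fin d → ℤ) {v : ℝ} (hv : |v| ≤ ((M z : ℝ))^2) :
    ‖w d α z * v‖ ≤ if z = 0 then 0 else ((M z : ℝ))^(2-((d:ℝ)+α)) := by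
  by_cases hz : z = 0
  · simp [hz, w]
  · rw [if_neg hz, w, if_neg hz]
    have hM : (1:ℝ) ≤ (M z : ℝ) := by exact_mod_cast one_le_M hz
    have hMpos : (0:ℝ) < (M z : ℝ) := by linarith
    rw [norm_mul, Real.norm_eq_abs, Real.norm_eq_abs,
      abs_of_nonneg (by positivity : (0:ℝ) ≤ ((M z : ℝ))^(-((d:ℝ)+α)))]
    calc ((M z:ℝ))^(-((d:ℝ)+α)) * |v| ≤ ((M z:ℝ))^(-((d:ℝ)+α)) * ((M z : ℝ))^2 :=
          mul_le_mul_of_nonneg_left hv (by positivity)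
      _ = ((M z : ℝ))^(2-((d:ℝ)+α)) := by
          rw [← Real.rpow_natCast ((M z : ℝ)) 2, ← Real.rpow_add hMpos]
          norm_num
          congr 1
          ring

lemma summable_w_pair (hd : 1 ≤ d) (hα : 2 < α) (i j : Fin d) :
    Summable (fun z : Fin d → ℤ => w d α z * ((z i : ℝ) * (z j : ℝ))) := by
  apply Summable.of_norm_bounded (summable_G d hd (β := (d:ℝ)+α) (by linarith))
  intro z
  apply w_mul_le hd z
  rw [abs_mul]
  calc |(z i:ℝ)| * |(z j:ℝ)| ≤ (M z : ℝ) * (M z : ℝ) :=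
        mul_le_mul (abs_le_M z i) (abs_le_M z j) (abs_nonneg _) (Nat.cast_nonneg _)
    _ = ((M z : ℝ))^2 := (sq ((M z : ℝ))).symm

/-- negation of coordinate i preserves everything -/
lemma tsum_offdiag (hd : 1 ≤ d) (hα : 2 < α) {i j : Fin d} (hij : i ≠ j) :
    ∑' z : Fin d → ℤ, w d α z * ((z i : ℝ) * (z j : ℝ)) = 0 := by
  set f := fun z : Fin d → ℤ => w d α z * ((z i : ℝ) * (z j : ℝ)) with hf
  have hinv : Function.Involutive
      (fun z : Fin d → ℤ => Function.update z i (-(z i))) := by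
    intro z
    funext k
    by_cases hk : k = i
    · subst hk; simp
    · simp [Function.update_of_ne hk]
  set e := hinv.toPerm with he
  have hMe : ∀ z, M (e z) = M z := by
    intro z
    apply Finset.sup_congr rfl
    intro k _
    by_cases hk : k = i
    · subst hk; simp [he, Function.Involutive.toPerm]
    · simp [he, Function.Involutive.toPerm, Function.update_of_ne hk]
  have hze : ∀ z : Fin d → ℤ, e z = 0 ↔ z = 0 := by
    intro z
    rw [← M_eq_zero, ← M_eq_zero, hMe]
  have hkey : ∀ z, f (e z) = - f z := by
    intro z
    have h1 : w d α (e z) = w d α z := by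
      rw [w, w, hMe]
      by_cases hz : z = 0
      · rw [if_pos ((hze z).mpr hz), if_pos hz]
      · rw [if_neg (fun h => hz ((hze z).mp h)), if_neg hz]
    have h2 : (e z) i = -(z i) := by simp [he, Function.Involutive.toPerm]
    have h3 : (e z) j = z j := by
      simp [he, Function.Involutive.toPerm, Function.update_of_ne (Ne.symm hij)]
    rw [hf]
    simp only [h1, h2, h3]
    push_cast
    ring
  have h4 : ∑' z, f (e z) = ∑' z, f z := e.tsum_eq f
  rw [tsum_congr hkey, tsum_neg] at h4
  linarith [h4]

lemma tsum_quad (hd : 1 ≤ d) (hα : 2 < α) (i₀ : Fin d) (θ : Fin d → ℝ) :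
    ∑' z : Fin d → ℤ, w d α z * (∑ i, (z i : ℝ) * θ i)^2
      = (∑' z : Fin d → ℤ, w d α z * ((z i₀ : ℝ))^2) * ∑ i, θ i ^ 2 := by
  have hterm : ∀ z : Fin d → ℤ, w d α z * (∑ i, (z i : ℝ) * θ i)^2
      = ∑ i, ∑ j, (w d α z * ((z i : ℝ) * (z j : ℝ))) * (θ i * θ j) := by
    intro z
    rw [sq, Finset.sum_mul_sum, Finset.mul_sum]
    apply Finset.sum_congr rfl
    intro i _
    rw [Finset.mul_sum]
    apply Finset.sum_congr rfl
    intro j _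
    ring
  rw [tsum_congr hterm]
  rw [Summable.tsum_finsetSum (fun i _ => summable_sum fun j _ => ((summable_w_pair hd hα i j).mul_right _))]
  have hswap : ∀ i : Fin d, ∑' z : Fin d → ℤ,
      ∑ j, (w d α z * ((z i : ℝ) * (z j : ℝ))) * (θ i * θ j)
      = ∑ j, (∑' z : Fin d → ℤ, w d α z * ((z i : ℝ) * (z j : ℝ))) * (θ i * θ j) := by
    intro i
    rw [Summable.tsum_finsetSum (fun j _ => (summable_w_pair hd hα i j).mul_right _)]
    exact Finset.sum_congr rfl fun j _ => tsum_mul_right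
  rw [Finset.sum_congr rfl fun i _ => hswap i]
  have hdiag : ∀ i : Fin d,
      ∑ j, (∑' z : Fin d → ℤ, w d α z * ((z i : ℝ) * (z j : ℝ))) * (θ i * θ j)
      = (∑' z : Fin d → ℤ, w d α z * ((z i₀ : ℝ))^2) * θ i ^ 2 := by
    intro i
    rw [Finset.sum_eq_single_of_mem i (Finset.mem_univ i)]
    · congr 1
      · have hsq : ∑' z : Fin d → ℤ, w d α z * ((z i : ℝ) * (z i : ℝ))
            = ∑' z : Fin d → ℤ, w d α z * ((z i : ℝ))^2 :=
          tsum_congr fun z => by rw [sq]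
        rw [hsq]
        have h3 := (hasSum_cseq hd hα i).unique (hasSum_cseq hd hα i₀)
        linarith
      · ring
    · intro j _ hji
      rw [tsum_offdiag hd hα (fun h => hji (h.symm)), zero_mul]
  rw [Finset.sum_congr rfl fun i _ => hdiag i, ← Finset.mul_sum]


/-- the comparison function -/
noncomputable def G (d : ℕ) (α : ℝ) (z : Fin d → ℤ) : ℝ :=
  if z = 0 then 0 else ((M z : ℝ))^(2-((d:ℝ)+α))

lemma summable_G' (hd : 1 ≤ d) (hα : 2 < α) : Summable (G d α) :=
  summable_G d hd (by push_cast; linarith)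

lemma w_mul_abs_le (z : Fin d → ℤ) {v c : ℝ} (hc : 0 ≤ c)
    (hv : |v| ≤ c * ((M z : ℝ))^2) :
    ‖w d α z * v‖ ≤ c * G d α z := by
  by_cases hz : z = 0
  · simp [hz, w, G]
  · rw [w, G, if_neg hz, if_neg hz]
    have hM : (1:ℝ) ≤ (M z : ℝ) := by exact_mod_cast one_le_M hz
    have hMpos : (0:ℝ) < (M z : ℝ) := by linarith
    have hG : ((M z:ℝ))^(-((d:ℝ)+α)) * ((M z : ℝ))^2 = ((M z : ℝ))^(2-((d:ℝ)+α)) := by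
      rw [← Real.rpow_natCast ((M z : ℝ)) 2, ← Real.rpow_add hMpos]
      norm_num
      congr 1
      ring
    rw [norm_mul, Real.norm_eq_abs, Real.norm_eq_abs,
      abs_of_nonneg (by positivity : (0:ℝ) ≤ ((M z : ℝ))^(-((d:ℝ)+α)))]
    calc ((M z:ℝ))^(-((d:ℝ)+α)) * |v| ≤ ((M z:ℝ))^(-((d:ℝ)+α)) * (c * ((M z : ℝ))^2) :=
          mul_le_mul_of_nonneg_left hv (by positivity)
      _ = c * (((M z:ℝ))^(-((d:ℝ)+α)) * ((M z : ℝ))^2) := by ring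
      _ = c * ((M z : ℝ))^(2-((d:ℝ)+α)) := by rw [hG]

lemma inner_sq_le (z : Fin d → ℤ) (θ : Fin d → ℝ) :
    (∑ i, (z i : ℝ) * θ i)^2 ≤ ((d:ℝ) * (∑ i, θ i ^ 2)) * ((M z : ℝ))^2 := by
  calc (∑ i, (z i : ℝ) * θ i)^2
      ≤ (∑ i, ((z i : ℝ))^2) * (∑ i, θ i ^ 2) :=
        Finset.sum_mul_sq_le_sq_mul_sq Finset.univ _ _
    _ ≤ ((d:ℝ) * ((M z : ℝ))^2) * (∑ i, θ i ^ 2) := by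
        apply mul_le_mul_of_nonneg_right _ (by positivity)
        calc (∑ i, ((z i : ℝ))^2) ≤ ∑ _i : Fin d, ((M z : ℝ))^2 := by
              apply Finset.sum_le_sum
              intro i _
              calc ((z i : ℝ))^2 = |(z i : ℝ)|^2 := (sq_abs _).symm
                _ ≤ ((M z : ℝ))^2 := pow_le_pow_left₀ (abs_nonneg _) (abs_le_M z i) 2
          _ = (d:ℝ) * ((M z : ℝ))^2 := by
              rw [Finset.sum_const, Finset.card_univ, Fintype.card_fin, nsmul_eq_mul]
    _ = ((d:ℝ) * (∑ i, θ i ^ 2)) * ((M z : ℝ))^2 := by ring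

lemma cos_err_bound (s : ℝ) : |Real.cos s - (1 - s^2/2)| ≤ s^2 := by
  have h1 := Real.one_sub_sq_div_two_le_cos (x := s)
  have h2 := Real.cos_le_one s
  rw [abs_le]
  constructor <;> nlinarith [sq_nonneg s]

lemma one_sub_cos_bound (s : ℝ) : |1 - Real.cos s| ≤ s^2/2 := by
  have h1 := Real.one_sub_sq_div_two_le_cos (x := s)
  have h2 := Real.cos_le_one s
  rw [abs_le]
  constructor <;> nlinarith [sq_nonneg s]

-- summabilities at a fixed θ
lemma summable_main (hd : 1 ≤ d) (hα : 2 < α) (θ : Fin d → ℝ) :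
    Summable (fun z : Fin d → ℤ =>
      w d α z * (1 - Real.cos (∑ i, (z i : ℝ) * θ i))) := by
  apply Summable.of_norm_bounded ((summable_G' hd hα).mul_left ((d:ℝ) * (∑ i, θ i ^ 2) / 2))
  intro z
  apply w_mul_abs_le z (by positivity)
  calc |1 - Real.cos (∑ i, (z i : ℝ) * θ i)| ≤ (∑ i, (z i : ℝ) * θ i)^2/2 :=
        one_sub_cos_bound _
    _ ≤ ((d:ℝ) * (∑ i, θ i ^ 2)) * ((M z : ℝ))^2 / 2 := by
        have := inner_sq_le z θ; linarith
    _ = (d:ℝ) * (∑ i, θ i ^ 2) / 2 * ((M z : ℝ))^2 := by ring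

lemma summable_sq (hd : 1 ≤ d) (hα : 2 < α) (θ : Fin d → ℝ) :
    Summable (fun z : Fin d → ℤ => w d α z * (∑ i, (z i : ℝ) * θ i)^2) := by
  apply Summable.of_norm_bounded ((summable_G' hd hα).mul_left ((d:ℝ) * (∑ i, θ i ^ 2)))
  intro z
  apply w_mul_abs_le z (by positivity)
  rw [abs_of_nonneg (sq_nonneg _)]
  exact inner_sq_le z θ

lemma summable_err (hd : 1 ≤ d) (hα : 2 < α) (θ : Fin d → ℝ) :
    Summable (fun z : Fin d → ℤ =>
      w d α z * (Real.cos (∑ i, (z i : ℝ) * θ i) - (1 - (∑ i, (z i : ℝ) * θ i)^2/2))) := by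
  apply Summable.of_norm_bounded ((summable_G' hd hα).mul_left ((d:ℝ) * (∑ i, θ i ^ 2)))
  intro z
  apply w_mul_abs_le z (by positivity)
  exact (cos_err_bound _).trans (inner_sq_le z θ)

lemma sum_sq_pos {θ : Fin d → ℝ} (hθ : θ ≠ 0) : 0 < ∑ i, θ i ^ 2 := by
  rcases (Finset.sum_nonneg (fun i _ => sq_nonneg (θ i))).lt_or_eq with h | h
  · exact h
  · exfalso
    apply hθ
    funext i
    have := (Finset.sum_eq_zero_iff_of_nonneg (fun i _ => sq_nonneg (θ i))).mp h.symm i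
      (Finset.mem_univ i)
    exact pow_eq_zero_iff (n := 2) (by norm_num) |>.mp this

lemma summable_diag (hd : 1 ≤ d) (hα : 2 < α) (i : Fin d) :
    Summable (fun z : Fin d → ℤ => w d α z * ((z i : ℝ))^2) := by
  apply Summable.of_norm_bounded ((summable_G' hd hα).mul_left 1)
  intro z
  apply w_mul_abs_le z zero_le_one
  rw [one_mul, abs_of_nonneg (sq_nonneg _)]
  calc ((z i : ℝ))^2 = |(z i : ℝ)|^2 := (sq_abs _).symm
    _ ≤ ((M z : ℝ))^2 := pow_le_pow_left₀ (abs_nonneg _) (abs_le_M z i) 2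

lemma D_pos (hd : 1 ≤ d) (hα : 2 < α) (i₀ : Fin d) :
    0 < ∑' z : Fin d → ℤ, w d α z * ((z i₀ : ℝ))^2 := by
  set zs : Fin d → ℤ := fun j => if j = i₀ then 1 else 0 with hzs
  have hzs0 : zs ≠ 0 := by
    intro h
    have := congrFun h i₀
    simp [hzs] at this
  have hM1 : M zs = 1 := by
    apply le_antisymm
    · rw [M_le_iff]
      intro i
      by_cases hi : i = i₀ <;> simp [hzs, hi]
    · exact one_le_M hzs0
  apply Summable.tsum_pos (summable_diag hd hα i₀) (fun z => mul_nonneg (w_nonneg z) (sq_nonneg _)) zs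
  rw [w, if_neg hzs0, hM1]
  simp [hzs]

lemma FdTermX_eq (hd : 1 ≤ d) (z : Fin d → ℤ) (θ : Fin d → ℝ) :
    FdTerm d α z θ = w d α z * (1 - Real.cos (∑ i, (z i : ℝ) * θ i)) := by
  unfold FdTerm w
  by_cases hz : z = 0
  · simp [hz]
  · rw [if_neg hz, if_neg hz, norm_eq_M z hd]

theorem Fd_main (d : ℕ) (hd : 1 ≤ d) (α : ℝ) (hα : 2 < α) :
    Filter.Tendsto
      (fun θ : Fin d → ℝ =>
        (∑' z : Fin d → ℤ, FdTerm d α z θ) /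
          ((1 / 6) *
            (∑' n : ℕ, ((n : ℝ) + 1) ^ (-((d : ℝ) + α - 1)) *
              ((2 * ((n : ℝ) + 1) + 1) ^ d * (((n : ℝ) + 1) + 1) -
                (2 * ((n : ℝ) + 1) - 1) ^ d * (((n : ℝ) + 1) - 1))) *
            Real.sqrt (∑ i, θ i ^ 2) ^ 2))
      (nhdsWithin 0 {(0 : Fin d → ℝ)}ᶜ) (nhds 1) := by
  have i₀ : Fin d := ⟨0, hd⟩
  set l := nhdsWithin (0 : Fin d → ℝ) {(0 : Fin d → ℝ)}ᶜ with hl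
  set D := ∑' z : Fin d → ℤ, w d α z * ((z i₀ : ℝ))^2 with hD
  have hDpos : 0 < D := D_pos hd hα i₀
  set S := fun θ : Fin d → ℝ => ∑ i, θ i ^ 2 with hS
  have hne : ∀ᶠ θ in l, θ ≠ 0 := eventually_mem_nhdsWithin
  have hSpos : ∀ {θ : Fin d → ℝ}, θ ≠ 0 → 0 < S θ := fun h => sum_sq_pos h
  -- continuity of S
  have hScont : Tendsto S l (𝓝 0) := by
    have : Continuous S := by
      apply continuous_finset_sum
      intro i _
      exact (continuous_apply i).pow 2
    have h0 : S 0 = 0 := by simp [hS]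
    exact (this.tendsto' 0 0 h0).mono_left nhdsWithin_le_nhds
  -- the error sum
  set E := fun θ : Fin d → ℝ => ∑' z : Fin d → ℤ,
    w d α z * (Real.cos (∑ i, (z i : ℝ) * θ i)
      - (1 - (∑ i, (z i : ℝ) * θ i)^2/2)) with hE
  -- F identity
  have hFid : ∀ θ : Fin d → ℝ, θ ≠ 0 →
      (∑' z : Fin d → ℤ, FdTerm d α z θ) / S θ = D/2 - (E θ) / S θ := by
    intro θ hθ
    have hSθ := hSpos hθ
    have hA : HasSum (fun z : Fin d → ℤ => w d α z * (∑ i, (z i : ℝ) * θ i)^2)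
        (D * S θ) := by
      have := (summable_sq hd hα θ).hasSum
      rwa [tsum_quad hd hα i₀ θ] at this
    have hB := (summable_err hd hα θ).hasSum
    have hsub := (hA.div_const 2).sub hB
    have hfeq : (fun z : Fin d → ℤ => w d α z * (∑ i, (z i : ℝ) * θ i)^2 / 2
        - w d α z * (Real.cos (∑ i, (z i : ℝ) * θ i)
          - (1 - (∑ i, (z i : ℝ) * θ i)^2/2)))
        = fun z : Fin d → ℤ => w d α z * (1 - Real.cos (∑ i, (z i : ℝ) * θ i)) := by
      funext z
      ring
    rw [hfeq] at hsub
    have hF : (∑' z : Fin d → ℤ, FdTerm d α z θ) = D * S θ / 2 - E θ := by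
      rw [tsum_congr (fun z => FdTermX_eq hd z θ), hsub.tsum_eq]
    rw [hF]
    field_simp
  -- dominated convergence for E/S
  have hEtendsto : Tendsto (fun θ => E θ / S θ) l (𝓝 0) := by
    have hdct : Tendsto (fun θ : Fin d → ℝ => ∑' z : Fin d → ℤ,
        (w d α z * (Real.cos (∑ i, (z i : ℝ) * θ i)
          - (1 - (∑ i, (z i : ℝ) * θ i)^2/2))) / S θ) l (𝓝 0) := by
      have h0 : (0:ℝ) = ∑' _z : Fin d → ℤ, (0:ℝ) := tsum_zero.symm
      rw [h0]
      apply tendsto_tsum_of_dominated_convergence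
        (bound := fun z => (d:ℝ) * G d α z)
        ((summable_G' hd hα).mul_left _)
      · -- pointwise limits
        intro z
        by_cases hz : z = 0
        · apply Tendsto.congr (f₁ := fun _ => (0:ℝ))
          · intro θ; simp [hz, w]
          · exact tendsto_const_nhds
        · -- squeeze
          have hscont : Tendsto (fun θ : Fin d → ℝ => ∑ i, (z i : ℝ) * θ i) l (𝓝 0) := by
            have hc : Continuous (fun θ : Fin d → ℝ => ∑ i, (z i : ℝ) * θ i) := by
              apply continuous_finset_sum
              intro i _
              exact continuous_const.mul (continuous_apply i)
            have h00 : (fun θ : Fin d → ℝ => ∑ i, (z i : ℝ) * θ i) 0 = 0 := by simp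
            exact (hc.tendsto' 0 0 h00).mono_left nhdsWithin_le_nhds
          have hsmall : ∀ᶠ θ in l, |∑ i, (z i : ℝ) * θ i| < 1 := by
            have := Metric.tendsto_nhds.mp hscont 1 one_pos
            filter_upwards [this] with θ hθ
            rwa [Real.dist_eq, sub_zero] at hθ
          rw [tendsto_zero_iff_abs_tendsto_zero]
          set K := w d α z * ((5/96) * ((d:ℝ))^2 * ((M z : ℝ))^4) with hK
          apply squeeze_zero' (Eventually.of_forall (fun θ => abs_nonneg _))
            (g := fun θ => K * S θ)
          · filter_upwards [hsmall, hne] with θ hθ1 hθ2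
            set s := ∑ i, (z i : ℝ) * θ i with hs
            have hSθ := hSpos hθ2
            have hcos : |Real.cos s - (1 - s^2/2)| ≤ |s|^4 * (5/96) :=
              Real.cos_bound (le_of_lt hθ1)
            have hs2 : s^2 ≤ ((d:ℝ) * S θ) * ((M z : ℝ))^2 := inner_sq_le z θ
            have hs4 : |s|^4 ≤ (((d:ℝ) * S θ) * ((M z : ℝ))^2)^2 := by
              calc |s|^4 = (s^2)^2 := by rw [← sq_abs s]; ring
                _ ≤ (((d:ℝ) * S θ) * ((M z : ℝ))^2)^2 :=
                  pow_le_pow_left₀ (sq_nonneg s) hs2 2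
            rw [abs_div, abs_of_pos hSθ, div_le_iff₀ hSθ]
            calc |w d α z * (Real.cos s - (1 - s^2/2))|
                = w d α z * |Real.cos s - (1 - s^2/2)| := by
                  rw [abs_mul, abs_of_nonneg (w_nonneg z)]
              _ ≤ w d α z * ((((d:ℝ) * S θ) * ((M z : ℝ))^2)^2 * (5/96)) := by
                  apply mul_le_mul_of_nonneg_left _ (w_nonneg z)
                  exact hcos.trans (mul_le_mul_of_nonneg_right hs4 (by norm_num))
              _ = (K * S θ) * S θ := by rw [hK]; ring
          · have : Tendsto (fun θ => K * S θ) l (𝓝 (K * 0)) := hScont.const_mul K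
            rwa [mul_zero] at this
      · -- uniform bound
        filter_upwards [hne] with θ hθ
        intro z
        have hSθ := hSpos hθ
        have hb : ‖w d α z * (Real.cos (∑ i, (z i : ℝ) * θ i)
            - (1 - (∑ i, (z i : ℝ) * θ i)^2/2))‖ ≤ ((d:ℝ) * S θ) * G d α z := by
          apply w_mul_abs_le z (by positivity)
          exact (cos_err_bound _).trans (inner_sq_le z θ)
        rw [norm_div, Real.norm_eq_abs (S θ), abs_of_pos hSθ, div_le_iff₀ hSθ]
        calc ‖w d α z * _‖ ≤ ((d:ℝ) * S θ) * G d α z := hb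
          _ = ((d:ℝ) * G d α z) * S θ := by ring
    apply hdct.congr'
    filter_upwards [hne] with θ hθ
    rw [hE, tsum_div_const]
  -- main limit of F/S
  have hmain : Tendsto (fun θ => (∑' z : Fin d → ℤ, FdTerm d α z θ) / S θ) l (𝓝 (D/2)) := by
    have h1 : Tendsto (fun θ => D/2 - E θ / S θ) l (𝓝 (D/2 - 0)) :=
      tendsto_const_nhds.sub hEtendsto
    rw [sub_zero] at h1
    apply h1.congr'
    filter_upwards [hne] with θ hθ
    exact (hFid θ hθ).symm
  -- conclusion
  have hC : (∑' n : ℕ, ((n : ℝ) + 1) ^ (-((d : ℝ) + α - 1)) *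
      ((2 * ((n : ℝ) + 1) + 1) ^ d * (((n : ℝ) + 1) + 1) -
        (2 * ((n : ℝ) + 1) - 1) ^ d * (((n : ℝ) + 1) - 1))) = 3 * D :=
    (hasSum_cseq hd hα i₀).tsum_eq
  rw [hC]
  have hfinal : Tendsto (fun θ =>
      ((∑' z : Fin d → ℤ, FdTerm d α z θ) / S θ) / (D/2)) l (𝓝 ((D/2)/(D/2))) :=
    hmain.div_const _
  rw [div_self (by positivity : D/2 ≠ 0)] at hfinal
  apply hfinal.congr'
  filter_upwards [hne] with θ hθ
  have hSθ := hSpos hθ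
  rw [Real.sq_sqrt (le_of_lt hSθ)]
  rw [div_div]
  congr 1
  ring


end main
end FdAux

theorem Fd_asymptotic_gt_two (d : ℕ) (hd : 1 ≤ d) (α : ℝ) (hα : 2 < α) :
    Filter.Tendsto
      (fun θ : Fin d → ℝ =>
        (∑' z : Fin d → ℤ, FdTerm d α z θ) /
          ((1 / 6) *
            (∑' n : ℕ, ((n : ℝ) + 1) ^ (-((d : ℝ) + α - 1)) *
              ((2 * ((n : ℝ) + 1) + 1) ^ d * (((n : ℝ) + 1) + 1) -
                (2 * ((n : ℝ) + 1) - 1) ^ d * (((n : ℝ) + 1) - 1))) *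
            Real.sqrt (∑ i, θ i ^ 2) ^ 2))
      (nhdsWithin 0 {(0 : Fin d → ℝ)}ᶜ) (nhds 1) :=
  FdAux.Fd_main d hd α hα
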